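/- For every integer a ≥ 1, every λ ∈ [0,1) and every t ∈ ℝ: a e^{−2t} ∑_{k∈ℤ} I_{ka}(2t) e^{−2πikλ} = ∑_{j=0}^{a−1} exp( −4t sin²( π(j+λ)/a ) ). -/

import Mathlib

open Real Filter MeasureTheory

set_option maxHeartbeats 1000000

/-- The bijection `(k, j) ↦ (j + k⁺, j + k⁻)` between `ℤ × ℕ` and `ℕ × ℕ`. -/
def besselEquiv : ℤ × ℕ ≃ ℕ × ℕ where
  toFun kj := (kj.2 + kj.1.toNat, kj.2 + (-kj.1).toNat)
  invFun pq := ((pq.1 : ℤ) - (pq.2 : ℤ), min pq.1 pq.2)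
  left_inv := by rintro ⟨k, j⟩; simp only [Prod.mk.injEq]; constructor <;> omega
  right_inv := by rintro ⟨p, q⟩; simp only [Prod.mk.injEq]; constructor <;> omega

lemma besselGF_aux (z w : ℂ) (hw : w ≠ 0) : ∀ kj : ℤ × ℕ,
      ((z * w / 2) ^ (besselEquiv kj).1 / (Nat.factorial (besselEquiv kj).1 : ℂ)) *
      ((z / (2 * w)) ^ (besselEquiv kj).2 / (Nat.factorial (besselEquiv kj).2 : ℂ)) =
      (z / 2) ^ (2 * kj.2 + kj.1.natAbs) /
        ((Nat.factorial kj.2 : ℂ) * (Nat.factorial (kj.2 + kj.1.natAbs) : ℂ)) * w ^ kj.1 := by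
    rintro ⟨k, j⟩
    rcases le_or_gt 0 k with hk | hk
    · obtain ⟨n, rfl⟩ := Int.eq_ofNat_of_zero_le hk
      have h1 : ((n : ℤ)).natAbs = n := Int.natAbs_natCast n
      have h2 : ((n : ℤ)).toNat = n := rfl
      have h3 : (-(n : ℤ)).toNat = 0 := by omega
      simp only [besselEquiv, Equiv.coe_fn_mk, h1, h2, h3, add_zero, zpow_natCast]
      have e1 := Nat.cast_ne_zero (R := ℂ) |>.mpr j.factorial_ne_zero
      have e2 := Nat.cast_ne_zero (R := ℂ) |>.mpr (j + n).factorial_ne_zero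
      field_simp
      have hwj : w ^ j * w⁻¹ ^ j = 1 := by rw [← mul_pow, mul_inv_cancel₀ hw, one_pow]
      linear_combination (z ^ (j * 2) * z ^ n * w ^ n * (1 / 2) ^ (j * 2) * (1 / 2) ^ n) * hwj
    · obtain ⟨n, rfl⟩ : ∃ n : ℕ, k = -(n : ℤ) := ⟨k.natAbs, by omega⟩
      have h1 : (-(n : ℤ)).natAbs = n := by omega
      have h2 : (-(n : ℤ)).toNat = 0 := by omega
      have h3 : (-(-(n : ℤ))).toNat = n := by omega
      simp only [besselEquiv, Equiv.coe_fn_mk, h1, h2, h3, add_zero, zpow_neg, zpow_natCast]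
      have e1 := Nat.cast_ne_zero (R := ℂ) |>.mpr j.factorial_ne_zero
      have e2 := Nat.cast_ne_zero (R := ℂ) |>.mpr (j + n).factorial_ne_zero
      field_simp
      have hwj : w ^ j * w⁻¹ ^ j = 1 := by rw [← mul_pow, mul_inv_cancel₀ hw, one_pow]
      have hwn : w ^ n * w⁻¹ ^ n = 1 := by rw [← mul_pow, mul_inv_cancel₀ hw, one_pow]
      linear_combination (z ^ (j * 2) * z ^ n * (1 / 2) ^ (j * 2) * (1 / 2) ^ n) *
        (w ^ n * w⁻¹ ^ n) * hwj + (z ^ (j * 2) * z ^ n * (1 / 2) ^ (j * 2) * (1 / 2) ^ n) * hwn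

lemma expNorm_summable (u : ℂ) : Summable fun n : ℕ => ‖u ^ n / (Nat.factorial n : ℂ)‖ := by
  have h := Real.summable_pow_div_factorial ‖u‖
  refine h.congr fun n => ?_
  simp [norm_div, norm_pow]

lemma besselI_gen (z w : ℂ) (hw : w ≠ 0) :
    Summable (fun k : ℤ => (∑' j : ℕ, (z / 2) ^ (2 * j + k.natAbs) /
        ((Nat.factorial j : ℂ) * (Nat.factorial (j + k.natAbs) : ℂ))) * w ^ k) ∧
    (∑' k : ℤ, (∑' j : ℕ, (z / 2) ^ (2 * j + k.natAbs) /
        ((Nat.factorial j : ℂ) * (Nat.factorial (j + k.natAbs) : ℂ))) * w ^ k)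
      = Complex.exp (z * w / 2) * Complex.exp (z / (2 * w)) := by
  have hsumF : Summable (fun pq : ℕ × ℕ =>
      ((z * w / 2) ^ pq.1 / (Nat.factorial pq.1 : ℂ)) *
      ((z / (2 * w)) ^ pq.2 / (Nat.factorial pq.2 : ℂ))) :=
    summable_mul_of_summable_norm
      (f := fun n : ℕ => (z * w / 2) ^ n / (Nat.factorial n : ℂ))
      (g := fun n : ℕ => (z / (2 * w)) ^ n / (Nat.factorial n : ℂ))
      (expNorm_summable _) (expNorm_summable _)
  have hsumG : Summable (fun kj : ℤ × ℕ =>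
      (z / 2) ^ (2 * kj.2 + kj.1.natAbs) /
        ((Nat.factorial kj.2 : ℂ) * (Nat.factorial (kj.2 + kj.1.natAbs) : ℂ)) * w ^ kj.1) :=
    ((besselEquiv.summable_iff).mpr hsumF).congr (besselGF_aux z w hw)
  have hexp : ∀ u : ℂ, Complex.exp u = ∑' n : ℕ, u ^ n / (Nat.factorial n : ℂ) := by
    intro u
    rw [Complex.exp_eq_exp_ℂ, NormedSpace.exp_eq_tsum_div]
  have htsumG : (∑' kj : ℤ × ℕ,
      (z / 2) ^ (2 * kj.2 + kj.1.natAbs) /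
        ((Nat.factorial kj.2 : ℂ) * (Nat.factorial (kj.2 + kj.1.natAbs) : ℂ)) * w ^ kj.1)
      = Complex.exp (z * w / 2) * Complex.exp (z / (2 * w)) := by
    rw [hexp, hexp,
      tsum_mul_tsum_of_summable_norm
        (f := fun n : ℕ => (z * w / 2) ^ n / (Nat.factorial n : ℂ))
        (g := fun n : ℕ => (z / (2 * w)) ^ n / (Nat.factorial n : ℂ))
        (expNorm_summable _) (expNorm_summable _),
      ← besselEquiv.tsum_eq]
    exact (tsum_congr (besselGF_aux z w hw)).symm
  constructor
  · refine (hsumG.prod).congr fun k => ?_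
    show (∑' j : ℕ, (z / 2) ^ (2 * j + k.natAbs) /
        ((Nat.factorial j : ℂ) * (Nat.factorial (j + k.natAbs) : ℂ)) * w ^ k) = _
    exact tsum_mul_right
  · rw [← htsumG, Summable.tsum_prod hsumG]
    refine tsum_congr fun k => ?_
    show _ = ∑' j : ℕ, (z / 2) ^ (2 * j + k.natAbs) /
        ((Nat.factorial j : ℂ) * (Nat.factorial (j + k.natAbs) : ℂ)) * w ^ k
    exact (tsum_mul_right).symm

lemma geom_lemma (a : ℕ) (ha : 1 ≤ a) (k : ℤ) :
    ∑ j ∈ Finset.range a, Complex.exp (-(2 * (π : ℂ) * (k : ℂ) / (a : ℂ)) * Complex.I) ^ j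
      = if (a : ℤ) ∣ k then (a : ℂ) else 0 := by
  have haC : (a : ℂ) ≠ 0 := Nat.cast_ne_zero.mpr (by omega)
  have hπ : (π : ℂ) ≠ 0 := Complex.ofReal_ne_zero.mpr Real.pi_ne_zero
  by_cases hd : (a : ℤ) ∣ k
  · obtain ⟨m, rfl⟩ := hd
    rw [if_pos ⟨m, rfl⟩]
    have hr : Complex.exp (-(2 * (π : ℂ) * ((a : ℤ) * m : ℤ) / (a : ℂ)) * Complex.I) = 1 := by
      rw [show (-(2 * (π : ℂ) * ((a : ℤ) * m : ℤ) / (a : ℂ)) * Complex.I)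
          = ((-m : ℤ) : ℂ) * (2 * π * Complex.I) by push_cast; field_simp]
      exact Complex.exp_int_mul_two_pi_mul_I (-m)
    rw [hr]
    simp
  · rw [if_neg hd]
    set r := Complex.exp (-(2 * (π : ℂ) * (k : ℂ) / (a : ℂ)) * Complex.I) with hrdef
    have hr1 : r ≠ 1 := by
      intro h
      rw [hrdef, Complex.exp_eq_one_iff] at h
      obtain ⟨n, hn⟩ := h
      apply hd
      refine ⟨-n, ?_⟩
      have hne : (2 * (π : ℂ) * Complex.I) ≠ 0 := by
        simp [hπ, Complex.I_ne_zero]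
      field_simp at hn
      have hzero : (2 * (π : ℂ) * Complex.I) * ((k : ℂ) + (a : ℂ) * (n : ℂ)) = 0 := by
        linear_combination -(2 * (π : ℂ) * Complex.I) * hn
      have he : (k : ℂ) + (a : ℂ) * (n : ℂ) = 0 :=
        (mul_eq_zero.mp hzero).resolve_left hne
      have : (k : ℂ) = ((a : ℤ) * -n : ℤ) := by push_cast; linear_combination he
      exact_mod_cast this
    rw [geom_sum_eq hr1]
    have hra : r ^ a = 1 := by
      rw [hrdef, ← Complex.exp_nat_mul,
        show (a : ℂ) * (-(2 * (π : ℂ) * (k : ℂ) / (a : ℂ)) * Complex.I)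
          = ((-k : ℤ) : ℂ) * (2 * π * Complex.I) by push_cast; field_simp]
      exact Complex.exp_int_mul_two_pi_mul_I (-k)
    rw [hra, sub_self, zero_div]


/-- Modified Bessel function of the first kind of integer order `m`,
`I_m(t) = ∑_{j=0}^∞ (t/2)^{2j+|m|} / (j! (j+|m|)!)`. -/
noncomputable def besselI (m : ℤ) (t : ℝ) : ℝ :=
  ∑' j : ℕ, (t / 2) ^ (2 * j + m.natAbs) /
    ((Nat.factorial j : ℝ) * (Nat.factorial (j + m.natAbs) : ℝ))

lemma besselI_complex (m : ℤ) (x : ℝ) :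
    ((besselI m x : ℝ) : ℂ) = ∑' j : ℕ, ((x : ℂ) / 2) ^ (2 * j + m.natAbs) /
      ((Nat.factorial j : ℂ) * (Nat.factorial (j + m.natAbs) : ℂ)) := by
  rw [besselI, Complex.ofReal_tsum]
  refine tsum_congr fun j => ?_
  push_cast
  ring

/-- Theta function of a twisted discrete circle:
`a e^{−2t} ∑_{k∈ℤ} I_{ka}(2t) e^{−2πikλ} = ∑_{j=0}^{a−1} exp(−4t sin²(π(j+λ)/a))`. -/
theorem twisted_circle_theta
    (a : ℕ) (ha : 1 ≤ a) (lam : ℝ) (hlam : lam ∈ Set.Ico (0 : ℝ) 1) (t : ℝ) :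
    (a : ℂ) * Complex.exp (-2 * (t : ℂ)) *
        ∑' k : ℤ, ((besselI (k * (a : ℤ)) (2 * t) : ℝ) : ℂ) *
          Complex.exp (-2 * (π : ℂ) * Complex.I * (k : ℂ) * (lam : ℂ)) =
      ((∑ j ∈ Finset.range a,
          Real.exp (-4 * t * Real.sin (π * ((j : ℝ) + lam) / (a : ℝ)) ^ 2) : ℝ) : ℂ) := by
  have ha0 : (a : ℂ) ≠ 0 := Nat.cast_ne_zero.mpr (by omega)
  have ha0' : (a : ℝ) ≠ 0 := Nat.cast_ne_zero.mpr (by omega)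
  -- summability of each column
  have hsumj : ∀ j : ℕ, Summable fun k : ℤ =>
      ((besselI k (2 * t) : ℝ) : ℂ) *
        Complex.exp ((-(2 * π * ((j : ℝ) + lam) / a) : ℝ) * Complex.I) ^ k := by
    intro j
    refine ((besselI_gen ((2 * t : ℝ) : ℂ)
      (Complex.exp ((-(2 * π * ((j : ℝ) + lam) / a) : ℝ) * Complex.I))
      (Complex.exp_ne_zero _)).1).congr fun k => ?_
    rw [← besselI_complex]
  -- the per-j theta identity
  have hterm : ∀ j : ℕ,
      ((Real.exp (-4 * t * Real.sin (π * ((j : ℝ) + lam) / (a : ℝ)) ^ 2) : ℝ) : ℂ)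
        = Complex.exp (-2 * (t : ℂ)) *
          ∑' k : ℤ, ((besselI k (2 * t) : ℝ) : ℂ) *
            Complex.exp ((-(2 * π * ((j : ℝ) + lam) / a) : ℝ) * Complex.I) ^ k := by
    intro j
    set u : ℝ := -(2 * π * ((j : ℝ) + lam) / a) with hu
    have hgen := besselI_gen ((2 * t : ℝ) : ℂ)
      (Complex.exp ((u : ℝ) * Complex.I)) (Complex.exp_ne_zero _)
    have hrw : (∑' k : ℤ, ((besselI k (2 * t) : ℝ) : ℂ) *
          Complex.exp ((u : ℝ) * Complex.I) ^ k)
        = Complex.exp (((2 * t : ℝ) : ℂ) * Complex.exp ((u : ℝ) * Complex.I) / 2) *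
            Complex.exp (((2 * t : ℝ) : ℂ) / (2 * Complex.exp ((u : ℝ) * Complex.I))) := by
      rw [← hgen.2]
      exact tsum_congr fun k => by rw [besselI_complex]
    rw [hrw, ← Complex.exp_add, ← Complex.exp_add]
    have hreal : -4 * t * Real.sin (π * ((j : ℝ) + lam) / a) ^ 2
        = -2 * t + 2 * t * Real.cos u := by
      rw [hu, Real.cos_neg, show 2 * π * ((j : ℝ) + lam) / a
          = 2 * (π * ((j : ℝ) + lam) / a) by ring, Real.cos_two_mul]
      have hs := Real.sin_sq_add_cos_sq (π * ((j : ℝ) + lam) / a)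
      linear_combination (-4 * t) * hs
    rw [hreal, Complex.ofReal_exp]
    congr 1
    have hw2 : (((2 * t : ℝ) : ℂ)) / (2 * Complex.exp ((u : ℝ) * Complex.I))
        = (t : ℂ) * Complex.exp (-(u : ℝ) * Complex.I) := by
      rw [show (-(u : ℝ) * Complex.I : ℂ) = -((u : ℝ) * Complex.I) by ring, Complex.exp_neg]
      have := Complex.exp_ne_zero ((u : ℝ) * Complex.I)
      field_simp
      push_cast
      ring
    have hc : Complex.exp ((u : ℝ) * Complex.I) + Complex.exp (-(u : ℝ) * Complex.I)
        = 2 * Complex.cos (u : ℂ) := by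
      rw [Complex.cos]
      ring
    rw [hw2]
    push_cast [Complex.ofReal_cos]
    linear_combination (-(t : ℂ)) * hc
  -- inner finite sum over j for fixed k
  have hinner : ∀ k : ℤ, (∑ j ∈ Finset.range a,
        ((besselI k (2 * t) : ℝ) : ℂ) *
          Complex.exp ((-(2 * π * ((j : ℝ) + lam) / a) : ℝ) * Complex.I) ^ k)
      = ((besselI k (2 * t) : ℝ) : ℂ) *
          (Complex.exp (-(2 * (π : ℂ) * (k : ℂ) * (lam : ℂ) / (a : ℂ)) * Complex.I) *
            (if (a : ℤ) ∣ k then (a : ℂ) else 0)) := by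
    intro k
    rw [← Finset.mul_sum]
    congr 1
    rw [← geom_lemma a ha k, Finset.mul_sum]
    refine Finset.sum_congr rfl fun j hj => ?_
    rw [← Complex.exp_int_mul, ← Complex.exp_nat_mul, ← Complex.exp_add]
    congr 1
    push_cast
    ring
  -- reindexing the tsum over multiples of a
  have hinj : Function.Injective (fun m : ℤ => m * (a : ℤ)) := fun x y h => by
    have haZ : (a : ℤ) ≠ 0 := by exact_mod_cast ha0
    exact mul_right_cancel₀ haZ h
  have hsupp : Function.support (fun k : ℤ => ((besselI k (2 * t) : ℝ) : ℂ) *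
        (Complex.exp (-(2 * (π : ℂ) * (k : ℂ) * (lam : ℂ) / (a : ℂ)) * Complex.I) *
          (if (a : ℤ) ∣ k then (a : ℂ) else 0))) ⊆
      Set.range (fun m : ℤ => m * (a : ℤ)) := by
    intro k hk
    by_contra hr
    have hnd : ¬ (a : ℤ) ∣ k := by
      rintro ⟨m, hm⟩
      exact hr ⟨m, by simp [hm, mul_comm]⟩
    exact hk (by simp [hnd])
  have hreindex : (∑' k : ℤ, ((besselI k (2 * t) : ℝ) : ℂ) *
        (Complex.exp (-(2 * (π : ℂ) * (k : ℂ) * (lam : ℂ) / (a : ℂ)) * Complex.I) *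
          (if (a : ℤ) ∣ k then (a : ℂ) else 0)))
      = (a : ℂ) * ∑' m : ℤ, ((besselI (m * (a : ℤ)) (2 * t) : ℝ) : ℂ) *
          Complex.exp (-2 * (π : ℂ) * Complex.I * (m : ℂ) * (lam : ℂ)) := by
    rw [← Function.Injective.tsum_eq hinj hsupp, ← tsum_mul_left]
    refine tsum_congr fun m => ?_
    have hd : (a : ℤ) ∣ m * (a : ℤ) := dvd_mul_left _ _
    rw [if_pos hd]
    rw [show Complex.exp (-(2 * (π : ℂ) * ((m * (a : ℤ) : ℤ) : ℂ) * (lam : ℂ) / (a : ℂ)) * Complex.I)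
        = Complex.exp (-2 * (π : ℂ) * Complex.I * (m : ℂ) * (lam : ℂ)) by
      congr 1
      push_cast
      field_simp]
    ring
  -- assemble
  rw [show (((∑ j ∈ Finset.range a,
      Real.exp (-4 * t * Real.sin (π * ((j : ℝ) + lam) / (a : ℝ)) ^ 2)) : ℝ) : ℂ)
      = ∑ j ∈ Finset.range a,
        ((Real.exp (-4 * t * Real.sin (π * ((j : ℝ) + lam) / (a : ℝ)) ^ 2) : ℝ) : ℂ) by
    push_cast; rfl]
  calc (a : ℂ) * Complex.exp (-2 * (t : ℂ)) *
        ∑' k : ℤ, ((besselI (k * (a : ℤ)) (2 * t) : ℝ) : ℂ) *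
          Complex.exp (-2 * (π : ℂ) * Complex.I * (k : ℂ) * (lam : ℂ))
      = Complex.exp (-2 * (t : ℂ)) *
          ((a : ℂ) * ∑' m : ℤ, ((besselI (m * (a : ℤ)) (2 * t) : ℝ) : ℂ) *
            Complex.exp (-2 * (π : ℂ) * Complex.I * (m : ℂ) * (lam : ℂ))) := by ring
    _ = Complex.exp (-2 * (t : ℂ)) *
          ∑' k : ℤ, ((besselI k (2 * t) : ℝ) : ℂ) *
            (Complex.exp (-(2 * (π : ℂ) * (k : ℂ) * (lam : ℂ) / (a : ℂ)) * Complex.I) *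
              (if (a : ℤ) ∣ k then (a : ℂ) else 0)) := by rw [hreindex]
    _ = Complex.exp (-2 * (t : ℂ)) *
          ∑' k : ℤ, ∑ j ∈ Finset.range a,
            ((besselI k (2 * t) : ℝ) : ℂ) *
              Complex.exp ((-(2 * π * ((j : ℝ) + lam) / a) : ℝ) * Complex.I) ^ k := by
        rw [tsum_congr hinner]
    _ = Complex.exp (-2 * (t : ℂ)) *
          ∑ j ∈ Finset.range a, ∑' k : ℤ,
            ((besselI k (2 * t) : ℝ) : ℂ) *
              Complex.exp ((-(2 * π * ((j : ℝ) + lam) / a) : ℝ) * Complex.I) ^ k := by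
        rw [Summable.tsum_finsetSum fun j _ => hsumj j]
    _ = ∑ j ∈ Finset.range a,
          ((Real.exp (-4 * t * Real.sin (π * ((j : ℝ) + lam) / (a : ℝ)) ^ 2) : ℝ) : ℂ) := by
        rw [Finset.mul_sum]
        exact Finset.sum_congr rfl fun j _ => (hterm j).symm
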